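/- Let n ≥ 1, let R be an n×n real upper triangular matrix with positive diagonal entries r_11,…,r_nn, let σ > 0, and let B = {x ∈ ℤⁿ : ℓ ≤ x ≤ u} with ℓ, u ∈ ℤⁿ and ℓ_i < u_i for all i. Let x̂ be uniformly distributed over B, let ṽ ~ N(0, σ²Iₙ) be independent of x̂, set ỹ = R x̂ + ṽ, and let x^BB be the box-constrained Babai detector defined recursively for i = n,…,1 by c_i = (ỹ_i − ∑_{j=i+1}^n r_ij x_j^BB)/r_ii and x_i^BB = ℓ_i if ⌊c_i⌉ ≤ ℓ_i, x_i^BB = ⌊c_i⌉ if ℓ_i < ⌊c_i⌉ < u_i, x_i^BB = u_i if ⌊c_i⌉ ≥ u_i. Then Pr(x^BB = x̂) = ∏_{i=1}^n [ 1/(u_i − ℓ_i + 1) + ((u_i − ℓ_i)/(u_i − ℓ_i + 1)) · φ_σ(r_ii) ]. -/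

import Mathlib

open MeasureTheory ProbabilityTheory Matrix
open scoped ENNReal NNReal

/-- Nearest integer rounding, with ties broken toward the integer of smaller magnitude. -/
noncomputable def nround (x : ℝ) : ℤ :=
  if 0 ≤ x then ⌈x - 1 / 2⌉ else ⌊x + 1 / 2⌋

/-- Clamp the nearest integer of `c` to the interval `[a, b]`:
`a` if `⌊c⌉ ≤ a`, `b` if `⌊c⌉ ≥ b`, and `⌊c⌉` otherwise. -/
noncomputable def clampInt (a b : ℤ) (c : ℝ) : ℤ :=
  if nround c ≤ a then a
  else if b ≤ nround c then b
  else nround c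

/-- The box-constrained rounding detector computed from `d`. -/
noncomputable def roundDetector {n : ℕ} (l u : Fin n → ℤ) (d : Fin n → ℝ) : Fin n → ℤ :=
  fun i => clampInt (l i) (u i) (d i)

lemma nround_dist (x : ℝ) : |x - nround x| ≤ 1/2 := by
  unfold nround
  split_ifs with h
  · have h1 := Int.le_ceil (x - 1/2)
    have h2 := Int.ceil_lt_add_one (x - 1/2)
    rw [abs_le]
    push_cast
    constructor <;> linarith
  · have h1 := Int.floor_le (x + 1/2)
    have h2 := Int.lt_floor_add_one (x + 1/2)
    rw [abs_le]
    push_cast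
    constructor <;> linarith

lemma nround_int_add (b : ℤ) (t : ℝ) (h : |t| < 1/2) : nround ((b:ℝ) + t) = b := by
  have h1 := nround_dist ((b:ℝ) + t)
  rw [abs_le] at h1
  rw [abs_lt] at h
  have h2 : ((nround ((b:ℝ)+t) : ℝ)) - b < 1 := by linarith
  have h3 : (-1 : ℝ) < ((nround ((b:ℝ)+t) : ℝ)) - b := by linarith
  have h4 : (nround ((b:ℝ)+t)) - b < 1 := by exact_mod_cast (by push_cast; linarith : ((nround ((b:ℝ)+t) - b : ℤ) : ℝ) < 1)
  have h5 : (-1 : ℤ) < (nround ((b:ℝ)+t)) - b := by exact_mod_cast (by push_cast; linarith : (-1 : ℝ) < ((nround ((b:ℝ)+t) - b : ℤ) : ℝ))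
  omega

lemma clampInt_eq_left_iff {a b : ℤ} (hab : a < b) (c : ℝ) :
    clampInt a b c = a ↔ nround c ≤ a := by
  unfold clampInt; split_ifs with h1 h2 <;> constructor <;> intro h <;> omega

lemma clampInt_eq_right_iff {a b : ℤ} (hab : a < b) (c : ℝ) :
    clampInt a b c = b ↔ b ≤ nround c := by
  unfold clampInt; split_ifs with h1 h2 <;> constructor <;> intro h <;> omega

lemma clampInt_eq_mid_iff {a b m : ℤ} (ha : a < m) (hb : m < b) (c : ℝ) :
    clampInt a b c = m ↔ nround c = m := by
  unfold clampInt; split_ifs with h1 h2 <;> constructor <;> intro h <;> omega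

-- interior inclusions
lemma mid_mem_of_abs_lt {a b m : ℤ} (ha : a < m) (hb : m < b) {t : ℝ} (ht : |t| < 1/2) :
    clampInt a b ((m:ℝ) + t) = m := by
  rw [clampInt_eq_mid_iff ha hb]; exact nround_int_add m t ht

lemma abs_le_of_mid_mem {a b m : ℤ} (ha : a < m) (hb : m < b) {t : ℝ}
    (h : clampInt a b ((m:ℝ) + t) = m) : |t| ≤ 1/2 := by
  rw [clampInt_eq_mid_iff ha hb] at h
  have := nround_dist ((m:ℝ) + t)
  rw [h] at this
  simpa using this

-- left inclusions
lemma left_mem_of_lt {a b : ℤ} (hab : a < b) {t : ℝ} (ht : t < 1/2) :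
    clampInt a b ((a:ℝ) + t) = a := by
  rw [clampInt_eq_left_iff hab]
  by_contra h
  push_neg at h
  have h2 := nround_dist ((a:ℝ) + t)
  rw [abs_le] at h2
  have : ((a + 1 : ℤ) : ℝ) ≤ (nround ((a:ℝ)+t) : ℝ) := by exact_mod_cast h
  push_cast at this
  linarith

lemma le_of_left_mem {a b : ℤ} (hab : a < b) {t : ℝ}
    (h : clampInt a b ((a:ℝ) + t) = a) : t ≤ 1/2 := by
  rw [clampInt_eq_left_iff hab] at h
  have h2 := nround_dist ((a:ℝ) + t)
  rw [abs_le] at h2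
  have : (nround ((a:ℝ)+t) : ℝ) ≤ a := by exact_mod_cast h
  linarith

-- right inclusions
lemma right_mem_of_lt {a b : ℤ} (hab : a < b) {t : ℝ} (ht : -(1/2) < t) :
    clampInt a b ((b:ℝ) + t) = b := by
  rw [clampInt_eq_right_iff hab]
  by_contra h
  push_neg at h
  have h2 := nround_dist ((b:ℝ) + t)
  rw [abs_le] at h2
  have : (nround ((b:ℝ)+t) : ℝ) ≤ ((b - 1 : ℤ) : ℝ) := by exact_mod_cast (by omega : nround ((b:ℝ)+t) ≤ b - 1)
  push_cast at this
  linarith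

lemma le_of_right_mem {a b : ℤ} (hab : a < b) {t : ℝ}
    (h : clampInt a b ((b:ℝ) + t) = b) : -(1/2) ≤ t := by
  rw [clampInt_eq_right_iff hab] at h
  have h2 := nround_dist ((b:ℝ) + t)
  rw [abs_le] at h2
  have : (b : ℝ) ≤ (nround ((b:ℝ)+t) : ℝ) := by exact_mod_cast h
  linarith

lemma measurable_nround : Measurable nround := by
  unfold nround
  exact Measurable.ite (measurableSet_le measurable_const measurable_id)
    (Int.measurable_ceil.comp (measurable_id.sub measurable_const))
    (Int.measurable_floor.comp (measurable_id.add measurable_const))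

lemma measurable_clampInt (a b : ℤ) : Measurable (clampInt a b) := by
  unfold clampInt
  apply Measurable.ite
  · exact measurable_nround (by trivial : MeasurableSet {m : ℤ | m ≤ a})
  · exact measurable_const
  · exact Measurable.ite (measurable_nround (by trivial : MeasurableSet {m : ℤ | b ≤ m}))
      measurable_const measurable_nround

/-- Auxiliary recursion for the box-constrained Babai detector: `babaiAux R l u y k`
has the correct Babai values at indices `i` with `i + k ≥ n` (computed from the last
index downwards). -/
noncomputable def babaiAux {n : ℕ} (R : Matrix (Fin n) (Fin n) ℝ) (l u : Fin n → ℤ)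
    (y : Fin n → ℝ) : ℕ → Fin n → ℤ
  | 0 => fun _ => 0
  | k + 1 => fun i =>
      if i.val + (k + 1) = n then
        clampInt (l i) (u i)
          ((y i - ∑ j : Fin n, if i < j then R i j * (babaiAux R l u y k j : ℝ) else 0) / R i i)
      else babaiAux R l u y k i

/-- The box-constrained Babai detector computed from `y`, for upper triangular `R`:
for `i = n, …, 1`, `c_i = (y_i - ∑_{j>i} r_{ij} x_j^BB)/r_{ii}` and `x_i^BB` is `⌊c_i⌉`
clamped to `[l_i, u_i]`. -/
noncomputable def babaiDetector {n : ℕ} (R : Matrix (Fin n) (Fin n) ℝ) (l u : Fin n → ℤ)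
    (y : Fin n → ℝ) : Fin n → ℤ :=
  babaiAux R l u y n

section Babai
variable {n : ℕ} (R : Matrix (Fin n) (Fin n) ℝ) (l u : Fin n → ℤ) (y : Fin n → ℝ)

lemma babaiAux_succ_of_le (k : ℕ) (i : Fin n) (h : n ≤ i.val + k) :
    babaiAux R l u y (k+1) i = babaiAux R l u y k i := by
  show (if i.val + (k + 1) = n then _ else babaiAux R l u y k i) = babaiAux R l u y k i
  rw [if_neg]; omega

lemma babaiAux_add (k : ℕ) (i : Fin n) (h : n ≤ i.val + k) (j : ℕ) :
    babaiAux R l u y (k + j) i = babaiAux R l u y k i := by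
  induction j with
  | zero => rfl
  | succ m ih => rw [← Nat.add_assoc, babaiAux_succ_of_le R l u y (k+m) i (by omega), ih]

lemma babaiAux_eq_det (k : ℕ) (i : Fin n) (h : n ≤ i.val + k) :
    babaiAux R l u y k i = babaiDetector R l u y i := by
  have hik := i.isLt
  have h1 : babaiAux R l u y k i = babaiAux R l u y (n - i.val) i := by
    have : (n - i.val) + (k - (n - i.val)) = k := by omega
    rw [← this]; exact babaiAux_add R l u y (n - i.val) i (by omega) _
  have h2 : babaiDetector R l u y i = babaiAux R l u y (n - i.val) i := by
    have h3 := babaiAux_add R l u y (n - i.val) i (by omega) i.val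
    rw [show n - i.val + i.val = n from by omega] at h3
    exact h3
  rw [h1, h2]

lemma babaiDetector_unfold (i : Fin n) :
    babaiDetector R l u y i = clampInt (l i) (u i)
      ((y i - ∑ j : Fin n, if i < j then R i j * (babaiDetector R l u y j : ℝ) else 0) / R i i) := by
  have hik := i.isLt
  have hk : n - i.val = (n - i.val - 1) + 1 := by omega
  have h1 : babaiDetector R l u y i = babaiAux R l u y (n - i.val) i :=
    (babaiAux_eq_det R l u y (n - i.val) i (by omega)).symm
  rw [h1, hk]
  show (if i.val + (n - i.val - 1 + 1) = n then
      clampInt (l i) (u i)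
        ((y i - ∑ j : Fin n, if i < j then R i j * (babaiAux R l u y (n - i.val - 1) j : ℝ) else 0) / R i i)
    else _) = _
  rw [if_pos (by omega)]
  have hsum : (∑ j : Fin n, if i < j then R i j * (babaiAux R l u y (n - i.val - 1) j : ℝ) else 0)
      = ∑ j : Fin n, if i < j then R i j * (babaiDetector R l u y j : ℝ) else 0 := by
    apply Finset.sum_congr rfl
    intro j _
    by_cases hij : i < j
    · rw [if_pos hij, if_pos hij, babaiAux_eq_det R l u y (n - i.val - 1) j (by
        have : i.val < j.val := hij
        omega)]
    · rw [if_neg hij, if_neg hij]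
  rw [hsum]

lemma numerator_eq (hupper : ∀ i j : Fin n, j < i → R i j = 0) (x : Fin n → ℤ) (w : Fin n → ℝ)
    (i : Fin n) (g : Fin n → ℤ) (hg : ∀ j, i < j → g j = x j) :
    ((R *ᵥ fun j => (x j : ℝ)) i + w i - ∑ j : Fin n, if i < j then R i j * (g j : ℝ) else 0)
      = R i i * (x i : ℝ) + w i := by
  have hterm : ∀ j : Fin n, R i j * (x j : ℝ) - (if i < j then R i j * (g j : ℝ) else 0)
      = if j = i then R i i * (x i : ℝ) else 0 := by
    intro j
    rcases lt_trichotomy i j with h | h | h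
    · rw [if_pos h, if_neg (by exact Fin.ne_of_gt h), hg j h]; ring
    · rw [if_neg (by simp [h]), if_pos h.symm, h]; ring
    · rw [if_neg (not_lt_of_gt h), if_neg (Fin.ne_of_lt h), hupper i j h]; ring
  have hmv : (R *ᵥ fun j => (x j : ℝ)) i = ∑ j : Fin n, R i j * (x j : ℝ) := by
    simp [Matrix.mulVec, dotProduct]
  rw [hmv]
  have : (∑ j : Fin n, R i j * (x j : ℝ)) - ∑ j : Fin n, (if i < j then R i j * (g j : ℝ) else 0)
      = ∑ j : Fin n, (if j = i then R i i * (x i : ℝ) else 0) := by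
    rw [← Finset.sum_sub_distrib]
    exact Finset.sum_congr rfl fun j _ => hterm j
  have h2 : (∑ j : Fin n, if j = i then R i i * (x i : ℝ) else 0) = R i i * (x i : ℝ) := by
    rw [Finset.sum_ite_eq' Finset.univ i fun _ => R i i * (x i : ℝ), if_pos (Finset.mem_univ i)]
  linarith [this, h2]

lemma babai_iff (hupper : ∀ i j : Fin n, j < i → R i j = 0) (hdiag : ∀ i : Fin n, R i i ≠ 0)
    (x : Fin n → ℤ) (w : Fin n → ℝ) :
    babaiDetector R l u (fun i => (R *ᵥ fun j => (x j : ℝ)) i + w i) = x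
      ↔ ∀ i, clampInt (l i) (u i) ((x i : ℝ) + w i / R i i) = x i := by
  set y : Fin n → ℝ := fun i => (R *ᵥ fun j => (x j : ℝ)) i + w i with hy
  have hdiv : ∀ i : Fin n, (R i i * (x i : ℝ) + w i) / R i i = (x i : ℝ) + w i / R i i := by
    intro i
    have h := hdiag i
    field_simp
  constructor
  · intro h i
    have h1 := babaiDetector_unfold R l u y i
    rw [h] at h1
    rw [show y i = (R *ᵥ fun j => (x j : ℝ)) i + w i from rfl] at h1
    rw [numerator_eq R hupper x w i x (fun _ _ => rfl), hdiv i] at h1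
    exact h1.symm
  · intro H
    funext i
    suffices hs : ∀ k : ℕ, ∀ i : Fin n, n ≤ i.val + k → babaiAux R l u y k i = x i by
      exact hs n i (by omega)
    intro k
    induction k with
    | zero => intro i hi; exact absurd hi (by have := i.isLt; omega)
    | succ m ih =>
      intro i hi
      show (if i.val + (m + 1) = n then
          clampInt (l i) (u i)
            ((y i - ∑ j : Fin n, if i < j then R i j * (babaiAux R l u y m j : ℝ) else 0) / R i i)
        else babaiAux R l u y m i) = x i
      by_cases hcase : i.val + (m + 1) = n
      · rw [if_pos hcase]
        have hsum : (∑ j : Fin n, if i < j then R i j * (babaiAux R l u y m j : ℝ) else 0)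
            = ∑ j : Fin n, if i < j then R i j * (x j : ℝ) else 0 := by
          apply Finset.sum_congr rfl
          intro j _
          by_cases hij : i < j
          · rw [if_pos hij, if_pos hij, ih j (by have : i.val < j.val := hij; omega)]
          · rw [if_neg hij, if_neg hij]
        rw [hsum, show y i = (R *ᵥ fun j => (x j : ℝ)) i + w i from rfl,
          numerator_eq R hupper x w i x (fun _ _ => rfl), hdiv i]
        exact H i
      · rw [if_neg hcase]
        exact ih i (by omega)

end Babai

/-- `phi σ ζ = (2/√(2π)) ∫_0^{ζ/(2σ)} exp(-t²/2) dt`. -/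
noncomputable def phi (σ ζ : ℝ) : ℝ :=
  2 / Real.sqrt (2 * Real.pi) * ∫ t in (0:ℝ)..(ζ / (2 * σ)), Real.exp (-(t ^ 2) / 2)


section Gauss
variable {σ : ℝ} (hσ : 0 < σ)

lemma phi_nonneg (hσ : 0 < σ) (r : ℝ) (hr : 0 ≤ r) : 0 ≤ phi σ r := by
  apply mul_nonneg
  · positivity
  · apply intervalIntegral.integral_nonneg
    · positivity
    · intro x _; positivity

private lemma Vne (hσ : 0 < σ) : (⟨σ ^ 2, sq_nonneg σ⟩ : ℝ≥0) ≠ 0 := by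
  intro h
  have h : σ ^ 2 = 0 := congrArg Subtype.val h
  exact hσ.ne' (by nlinarith)

lemma pdf_eq (hσ : 0 < σ) (x : ℝ) :
    gaussianPDFReal 0 ⟨σ ^ 2, sq_nonneg σ⟩ x
      = (Real.sqrt (2 * Real.pi) * σ)⁻¹ * Real.exp (-((x / σ) ^ 2) / 2) := by
  unfold gaussianPDFReal
  change (Real.sqrt (2 * Real.pi * σ ^ 2))⁻¹ * Real.exp (-(x - 0) ^ 2 / (2 * σ ^ 2)) = _
  have h2 : Real.sqrt (2 * Real.pi * σ ^ 2) = Real.sqrt (2 * Real.pi) * σ := by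
    rw [Real.sqrt_mul (by positivity), Real.sqrt_sq hσ.le]
  rw [h2, sub_zero]
  congr 1
  rw [div_pow, neg_div, neg_div, div_div, mul_comm (σ^2) 2]

lemma pdf_even (hσ : 0 < σ) (x : ℝ) :
    gaussianPDFReal 0 ⟨σ ^ 2, sq_nonneg σ⟩ (-x) = gaussianPDFReal 0 ⟨σ ^ 2, sq_nonneg σ⟩ x := by
  rw [pdf_eq hσ, pdf_eq hσ]
  congr 2
  rw [neg_div]
  ring

lemma integral_pdf_zero_to (hσ : 0 < σ) (c : ℝ) :
    ∫ x in (0:ℝ)..c, gaussianPDFReal 0 ⟨σ ^ 2, sq_nonneg σ⟩ x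
      = (Real.sqrt (2 * Real.pi))⁻¹ * ∫ t in (0:ℝ)..(c / σ), Real.exp (-(t ^ 2) / 2) := by
  have h1 : ∫ x in (0:ℝ)..c, gaussianPDFReal 0 ⟨σ ^ 2, sq_nonneg σ⟩ x
      = (Real.sqrt (2 * Real.pi) * σ)⁻¹ * ∫ x in (0:ℝ)..c, Real.exp (-((x / σ) ^ 2) / 2) := by
    rw [← intervalIntegral.integral_const_mul]
    apply intervalIntegral.integral_congr
    intro x _
    rw [pdf_eq hσ]
  rw [h1]
  have h2 : ∫ x in (0:ℝ)..c, Real.exp (-((x / σ) ^ 2) / 2)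
      = σ * ∫ t in (0:ℝ)..(c / σ), Real.exp (-(t ^ 2) / 2) := by
    have := intervalIntegral.integral_comp_div (a := (0:ℝ)) (b := c)
      (f := fun t => Real.exp (-(t ^ 2) / 2)) hσ.ne'
    rw [this, zero_div]
    simp [smul_eq_mul]
  rw [h2, ← mul_assoc]
  congr 1
  rw [mul_inv, mul_assoc, inv_mul_cancel₀ hσ.ne', mul_one]

lemma integral_pdf_Iic_zero (hσ : 0 < σ) :
    ∫ x in Set.Iic (0:ℝ), gaussianPDFReal 0 ⟨σ ^ 2, sq_nonneg σ⟩ x = 1/2 := by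
  set f := gaussianPDFReal 0 (⟨σ ^ 2, sq_nonneg σ⟩ : ℝ≥0) with hf
  have hint : Integrable f := integrable_gaussianPDFReal 0 _
  have h1 : ∫ x in Set.Iic (0:ℝ), f x = ∫ x in Set.Ioi (0:ℝ), f x := by
    have := integral_comp_neg_Iic (0:ℝ) f
    rw [neg_zero] at this
    rw [← this]
    apply setIntegral_congr_fun measurableSet_Iic
    intro x _
    exact (pdf_even hσ x).symm
  have h3 : (∫ x in Set.Iic (0:ℝ), f x) + ∫ x in Set.Ioi (0:ℝ), f x = ∫ x, f x := by
    rw [← setIntegral_union (Set.Iic_disjoint_Ioi le_rfl) measurableSet_Ioi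
      hint.integrableOn hint.integrableOn, Set.Iic_union_Ioi, setIntegral_univ]
  rw [integral_gaussianPDFReal_eq_one 0 (Vne hσ)] at h3
  linarith [h1, h3]

end Gauss

section GaussMeasure
variable {σ : ℝ}


lemma nu_null (hσ : 0 < σ) (x : ℝ) : gaussianReal 0 (⟨σ ^ 2, sq_nonneg σ⟩ : ℝ≥0) {x} = 0 :=
  gaussianReal_absolutelyContinuous 0 (Vne hσ) Real.volume_singleton

lemma integral_pdf_Ioc (hσ : 0 < σ) {r : ℝ} (hr : 0 < r) :
    ∫ x in Set.Ioc (0:ℝ) (r/2), gaussianPDFReal 0 (⟨σ ^ 2, sq_nonneg σ⟩ : ℝ≥0) x = phi σ r / 2 := by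
  rw [← intervalIntegral.integral_of_le (by positivity : (0:ℝ) ≤ r/2),
    integral_pdf_zero_to hσ (r/2)]
  unfold phi
  rw [show r / 2 / σ = r / (2 * σ) from by rw [div_div]]
  rw [div_eq_mul_inv 2 (Real.sqrt (2*Real.pi))]
  ring

lemma nu_Iic (hσ : 0 < σ) {r : ℝ} (hr : 0 < r) :
    gaussianReal 0 (⟨σ ^ 2, sq_nonneg σ⟩ : ℝ≥0) (Set.Iic (r/2)) = ENNReal.ofReal (1/2 + phi σ r / 2) := by
  rw [gaussianReal_apply_eq_integral 0 (Vne hσ)]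
  congr 1
  have hsub : Set.Iic (0:ℝ) ∪ Set.Ioc 0 (r/2) = Set.Iic (r/2) :=
    Set.Iic_union_Ioc_eq_Iic (by positivity)
  rw [← hsub, setIntegral_union (Set.Iic_disjoint_Ioc le_rfl) measurableSet_Ioc
    (integrable_gaussianPDFReal 0 (⟨σ ^ 2, sq_nonneg σ⟩ : ℝ≥0)).integrableOn (integrable_gaussianPDFReal 0 (⟨σ ^ 2, sq_nonneg σ⟩ : ℝ≥0)).integrableOn,
    integral_pdf_Iic_zero hσ, integral_pdf_Ioc hσ hr]

lemma nu_Ici (hσ : 0 < σ) {r : ℝ} (hr : 0 < r) :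
    gaussianReal 0 (⟨σ ^ 2, sq_nonneg σ⟩ : ℝ≥0) (Set.Ici (-(r/2))) = ENNReal.ofReal (1/2 + phi σ r / 2) := by
  rw [← nu_Iic hσ hr, gaussianReal_apply_eq_integral 0 (Vne hσ),
    gaussianReal_apply_eq_integral 0 (Vne hσ)]
  congr 1
  have := integral_comp_neg_Iic (r/2) (fun x => gaussianPDFReal 0 (⟨σ ^ 2, sq_nonneg σ⟩ : ℝ≥0) x)
  have heq : ∫ x in Set.Iic (r/2), gaussianPDFReal 0 (⟨σ ^ 2, sq_nonneg σ⟩ : ℝ≥0) (-x) = ∫ x in Set.Iic (r/2), gaussianPDFReal 0 (⟨σ ^ 2, sq_nonneg σ⟩ : ℝ≥0) x := by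
    apply setIntegral_congr_fun measurableSet_Iic
    intro x _
    exact pdf_even hσ x
  rw [heq] at this
  rw [integral_Ici_eq_integral_Ioi, ← this]

lemma nu_Icc (hσ : 0 < σ) {r : ℝ} (hr : 0 < r) :
    gaussianReal 0 (⟨σ ^ 2, sq_nonneg σ⟩ : ℝ≥0) (Set.Icc (-(r/2)) (r/2)) = ENNReal.ofReal (phi σ r) := by
  rw [gaussianReal_apply_eq_integral 0 (Vne hσ)]
  congr 1
  rw [integral_Icc_eq_integral_Ioc]
  have hle : -(r/2) ≤ r/2 := by linarith
  rw [← intervalIntegral.integral_of_le hle,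
    ← intervalIntegral.integral_add_adjacent_intervals
      (a := -(r/2)) (b := 0) (c := r/2)
      ((integrable_gaussianPDFReal 0 (⟨σ ^ 2, sq_nonneg σ⟩ : ℝ≥0)).intervalIntegrable)
      ((integrable_gaussianPDFReal 0 (⟨σ ^ 2, sq_nonneg σ⟩ : ℝ≥0)).intervalIntegrable)]
  have h1 : ∫ x in (-(r/2):ℝ)..0, gaussianPDFReal 0 (⟨σ ^ 2, sq_nonneg σ⟩ : ℝ≥0) x = ∫ x in (0:ℝ)..(r/2), gaussianPDFReal 0 (⟨σ ^ 2, sq_nonneg σ⟩ : ℝ≥0) x := by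
    have := intervalIntegral.integral_comp_neg (a := (0:ℝ)) (b := r/2) (fun x => gaussianPDFReal 0 (⟨σ ^ 2, sq_nonneg σ⟩ : ℝ≥0) x)
    rw [neg_zero] at this
    rw [← this]
    apply intervalIntegral.integral_congr
    intro x _
    exact pdf_even hσ x
  rw [h1, intervalIntegral.integral_of_le (by positivity : (0:ℝ) ≤ r/2),
    integral_pdf_Ioc hσ hr]
  ring

end GaussMeasure

lemma meas_sandwich {X : Type*} [MeasurableSpace X] (ν : Measure X) {S1 E S2 : Set X}
    (h1 : S1 ⊆ E) (h2 : E ⊆ S2) (heq : ν S1 = ν S2) : ν E = ν S2 :=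
  le_antisymm (measure_mono h2) (heq ▸ measure_mono h1)

section ClampSet
variable {σ : ℝ}

lemma nu_clampSet_left (hσ : 0 < σ) (a b : ℤ) (hab : a < b) (r : ℝ) (hr : 0 < r) :
    gaussianReal 0 (⟨σ ^ 2, sq_nonneg σ⟩ : ℝ≥0) {t : ℝ | clampInt a b ((a:ℝ) + t / r) = a}
      = ENNReal.ofReal (1/2 + phi σ r / 2) := by
  set ν := gaussianReal 0 (⟨σ ^ 2, sq_nonneg σ⟩ : ℝ≥0) with hν
  have hsub1 : Set.Iio (r/2) ⊆ {t : ℝ | clampInt a b ((a:ℝ) + t / r) = a} := by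
    intro t ht
    rw [Set.mem_Iio] at ht
    exact left_mem_of_lt hab ((div_lt_iff₀ hr).2 (show t < 1/2 * r by linarith))
  have hsub2 : {t : ℝ | clampInt a b ((a:ℝ) + t / r) = a} ⊆ Set.Iic (r/2) := by
    intro t ht
    have h1 := le_of_left_mem hab ht
    rw [Set.mem_Iic]
    have h2 := (div_le_iff₀ hr).1 h1
    linarith
  have heq : ν (Set.Iio (r/2)) = ν (Set.Iic (r/2)) := by
    apply le_antisymm (measure_mono Set.Iio_subset_Iic_self)
    calc ν (Set.Iic (r/2)) = ν (Set.Iio (r/2) ∪ {r/2}) := by rw [Set.Iio_union_right]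
      _ ≤ ν (Set.Iio (r/2)) + ν {r/2} := measure_union_le _ _
      _ = ν (Set.Iio (r/2)) := by rw [nu_null hσ, add_zero]
  rw [meas_sandwich ν hsub1 hsub2 heq]
  exact nu_Iic hσ hr

lemma nu_clampSet_right (hσ : 0 < σ) (a b : ℤ) (hab : a < b) (r : ℝ) (hr : 0 < r) :
    gaussianReal 0 (⟨σ ^ 2, sq_nonneg σ⟩ : ℝ≥0) {t : ℝ | clampInt a b ((b:ℝ) + t / r) = b}
      = ENNReal.ofReal (1/2 + phi σ r / 2) := by
  set ν := gaussianReal 0 (⟨σ ^ 2, sq_nonneg σ⟩ : ℝ≥0) with hν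
  have hsub1 : Set.Ioi (-(r/2)) ⊆ {t : ℝ | clampInt a b ((b:ℝ) + t / r) = b} := by
    intro t ht
    rw [Set.mem_Ioi] at ht
    apply right_mem_of_lt hab
    rw [neg_lt, ← neg_div]
    exact (div_lt_iff₀ hr).2 (show -t < 1/2 * r by linarith)
  have hsub2 : {t : ℝ | clampInt a b ((b:ℝ) + t / r) = b} ⊆ Set.Ici (-(r/2)) := by
    intro t ht
    have h1 := le_of_right_mem hab ht
    rw [Set.mem_Ici]
    rw [neg_le, ← neg_div] at h1
    have h2 := (div_le_iff₀ hr).1 h1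
    linarith
  have heq : ν (Set.Ioi (-(r/2))) = ν (Set.Ici (-(r/2))) := by
    apply le_antisymm (measure_mono Set.Ioi_subset_Ici_self)
    calc ν (Set.Ici (-(r/2))) = ν (Set.Ioi (-(r/2)) ∪ {-(r/2)}) := by rw [Set.Ioi_union_left]
      _ ≤ ν (Set.Ioi (-(r/2))) + ν {-(r/2)} := measure_union_le _ _
      _ = ν (Set.Ioi (-(r/2))) := by rw [nu_null hσ, add_zero]
  rw [meas_sandwich ν hsub1 hsub2 heq]
  exact nu_Ici hσ hr

lemma nu_clampSet_mid (hσ : 0 < σ) (a b m : ℤ) (ha : a < m) (hb : m < b) (r : ℝ) (hr : 0 < r) :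
    gaussianReal 0 (⟨σ ^ 2, sq_nonneg σ⟩ : ℝ≥0) {t : ℝ | clampInt a b ((m:ℝ) + t / r) = m}
      = ENNReal.ofReal (phi σ r) := by
  set ν := gaussianReal 0 (⟨σ ^ 2, sq_nonneg σ⟩ : ℝ≥0) with hν
  have hsub1 : Set.Ioo (-(r/2)) (r/2) ⊆ {t : ℝ | clampInt a b ((m:ℝ) + t / r) = m} := by
    intro t ht
    rw [Set.mem_Ioo] at ht
    apply mid_mem_of_abs_lt ha hb
    rw [abs_div, abs_of_pos hr, div_lt_iff₀ hr, abs_lt]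
    constructor <;> linarith
  have hsub2 : {t : ℝ | clampInt a b ((m:ℝ) + t / r) = m} ⊆ Set.Icc (-(r/2)) (r/2) := by
    intro t ht
    have h1 := abs_le_of_mid_mem ha hb ht
    rw [abs_div, abs_of_pos hr, div_le_iff₀ hr, abs_le] at h1
    rw [Set.mem_Icc]
    constructor <;> linarith
  have heq : ν (Set.Ioo (-(r/2)) (r/2)) = ν (Set.Icc (-(r/2)) (r/2)) := by
    apply le_antisymm (measure_mono Set.Ioo_subset_Icc_self)
    have hsub3 : Set.Icc (-(r/2)) (r/2) ⊆ {-(r/2)} ∪ ({r/2} ∪ Set.Ioo (-(r/2)) (r/2)) := by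
      intro x hx
      rw [Set.mem_Icc] at hx
      by_cases h1 : x = -(r/2)
      · exact Or.inl h1
      · by_cases h2 : x = r/2
        · exact Or.inr (Or.inl h2)
        · exact Or.inr (Or.inr ⟨lt_of_le_of_ne hx.1 (Ne.symm h1), lt_of_le_of_ne hx.2 h2⟩)
    calc ν (Set.Icc (-(r/2)) (r/2)) ≤ ν ({-(r/2)} ∪ ({r/2} ∪ Set.Ioo (-(r/2)) (r/2))) :=
          measure_mono hsub3
      _ ≤ ν {-(r/2)} + ν ({r/2} ∪ Set.Ioo (-(r/2)) (r/2)) := measure_union_le _ _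
      _ ≤ ν {-(r/2)} + (ν {r/2} + ν (Set.Ioo (-(r/2)) (r/2))) :=
          add_le_add_right (measure_union_le _ _) _
      _ = ν (Set.Ioo (-(r/2)) (r/2)) := by rw [nu_null hσ, nu_null hσ, zero_add, zero_add]
  rw [meas_sandwich ν hsub1 hsub2 heq]
  exact nu_Icc hσ hr

lemma nu_clampSet (hσ : 0 < σ) (a b : ℤ) (hab : a < b) (r : ℝ) (hr : 0 < r)
    (c : ℤ) (hac : a ≤ c) (hcb : c ≤ b) :
    gaussianReal 0 (⟨σ ^ 2, sq_nonneg σ⟩ : ℝ≥0) {t : ℝ | clampInt a b ((c:ℝ) + t / r) = c}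
      = ENNReal.ofReal (if c = a ∨ c = b then 1/2 + phi σ r / 2 else phi σ r) := by
  by_cases hca : c = a
  · rw [if_pos (Or.inl hca), hca]
    exact nu_clampSet_left hσ a b hab r hr
  · by_cases hcb' : c = b
    · rw [if_pos (Or.inr hcb'), hcb']
      exact nu_clampSet_right hσ a b hab r hr
    · rw [if_neg (by tauto)]
      exact nu_clampSet_mid hσ a b c (lt_of_le_of_ne hac (Ne.symm hca))
        (lt_of_le_of_ne hcb hcb') r hr

lemma clampSet_measurable (a b : ℤ) (c : ℤ) (r : ℝ) :
    MeasurableSet {t : ℝ | clampInt a b ((c:ℝ) + t / r) = c} := by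
  have hm : Measurable fun t : ℝ => clampInt a b ((c:ℝ) + t / r) :=
    (measurable_clampInt a b).comp (measurable_const.add (measurable_id.div_const r))
  exact hm (by trivial : MeasurableSet {c})

end ClampSet

lemma sum_clamp {σ : ℝ} (hσ : 0 < σ) {r : ℝ} (hr : 0 < r) (a b : ℤ) (hab : a < b) :
    ∑ c ∈ Finset.Icc a b,
        ENNReal.ofReal (if c = a ∨ c = b then 1/2 + phi σ r / 2 else phi σ r)
      = ENNReal.ofReal (1 + ((b - a : ℤ) : ℝ) * phi σ r) := by
  have hphi := phi_nonneg hσ r hr.le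
  rw [← Finset.Ioc_insert_left hab.le, Finset.sum_insert (by simp),
    ← Finset.Ioo_insert_right hab, Finset.sum_insert (by simp)]
  have hmid : ∀ c ∈ Finset.Ioo a b,
      ENNReal.ofReal (if c = a ∨ c = b then 1/2 + phi σ r / 2 else phi σ r)
        = ENNReal.ofReal (phi σ r) := by
    intro c hc
    rw [Finset.mem_Ioo] at hc
    rw [if_neg (by omega)]
  rw [Finset.sum_congr rfl hmid, Finset.sum_const, Int.card_Ioo,
    if_pos (Or.inl rfl : a = a ∨ a = b), if_pos (Or.inr rfl : b = a ∨ b = b)]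
  have h0 : (0:ℝ) ≤ 1/2 + phi σ r / 2 := by linarith
  have h1 : (0:ℝ) ≤ ((b - a - 1).toNat : ℝ) * phi σ r := mul_nonneg (Nat.cast_nonneg _) hphi
  rw [nsmul_eq_mul, ← ENNReal.ofReal_natCast ((b - a - 1).toNat),
    ← ENNReal.ofReal_mul (Nat.cast_nonneg _),
    ← ENNReal.ofReal_add h0 h1, ← ENNReal.ofReal_add h0 (by linarith)]
  congr 1
  have hnn : ((b - a - 1).toNat : ℝ) = (b:ℝ) - (a:ℝ) - 1 := by
    have h2 : ((b - a - 1).toNat : ℤ) = b - a - 1 := Int.toNat_of_nonneg (by omega)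
    exact_mod_cast h2
  rw [hnn]
  push_cast
  ring

/-- Success probability of the box-constrained Babai detector for a parameter uniformly
distributed over the box (Theorem 4 of the paper). -/
theorem success_prob_boxBabai_uniform
    {n : ℕ} (hn : 1 ≤ n)
    (R : Matrix (Fin n) (Fin n) ℝ)
    (hupper : ∀ i j : Fin n, j < i → R i j = 0)
    (hdiag : ∀ i : Fin n, 0 < R i i)
    (σ : ℝ) (hσ : 0 < σ)
    (l u : Fin n → ℤ) (hlu : ∀ i, l i < u i)
    {Ω : Type} [MeasurableSpace Ω] (P : Measure Ω) [IsProbabilityMeasure P]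
    (v : Ω → Fin n → ℝ) (hmv : Measurable v)
    (hv : Measure.map v P = Measure.pi fun _ : Fin n => gaussianReal 0 ⟨σ ^ 2, sq_nonneg σ⟩)
    (B : Finset (Fin n → ℤ)) (hB : B = Fintype.piFinset fun i => Finset.Icc (l i) (u i))
    (xhat : Ω → Fin n → ℤ) (hmx : Measurable xhat)
    (hmem : ∀ ω, xhat ω ∈ B)
    (hunif : ∀ b ∈ B, P {ω | xhat ω = b} = (B.card : ℝ≥0∞)⁻¹)
    (hindep : IndepFun xhat v P) :
    (P {ω | babaiDetector R l u (fun i => (R *ᵥ (fun j => (xhat ω j : ℝ))) i + v ω i) = xhat ω}).toReal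
      = ∏ i, (1 / ((u i - l i + 1 : ℤ) : ℝ)
              + (((u i - l i : ℤ) : ℝ) / ((u i - l i + 1 : ℤ) : ℝ)) * phi σ (R i i)) := by
  have hdiag' : ∀ i, R i i ≠ 0 := fun i => (hdiag i).ne'
  -- the per-coordinate sets
  set T : Fin n → ℤ → Set ℝ :=
    fun i c => {t : ℝ | clampInt (l i) (u i) ((c:ℝ) + t / R i i) = c} with hTdef
  set S : (Fin n → ℤ) → Set (Fin n → ℝ) :=
    fun b => Set.pi Set.univ (fun i => T i (b i)) with hSdef
  have hSmeas : ∀ b, MeasurableSet (S b) :=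
    fun b => MeasurableSet.univ_pi fun i => clampSet_measurable _ _ _ _
  -- rewrite the event
  have hset : {ω | babaiDetector R l u (fun i => (R *ᵥ (fun j => (xhat ω j : ℝ))) i + v ω i) = xhat ω}
      = ⋃ b ∈ B, (xhat ⁻¹' {b} ∩ v ⁻¹' S b) := by
    ext ω
    rw [Set.mem_setOf_eq, babai_iff R l u hupper hdiag' (xhat ω) (v ω)]
    simp only [Set.mem_iUnion, Set.mem_inter_iff, Set.mem_preimage, Set.mem_singleton_iff,
      hSdef, Set.mem_univ_pi, hTdef, Set.mem_setOf_eq]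
    constructor
    · intro h
      exact ⟨xhat ω, hmem ω, rfl, fun i => h i⟩
    · rintro ⟨b, hbB, hxb, hvS⟩
      intro i
      rw [hxb]
      exact hvS i
  rw [hset]
  -- decomposition into disjoint measurable pieces
  have hdisj : Set.PairwiseDisjoint (↑B) (fun b => xhat ⁻¹' {b} ∩ v ⁻¹' S b) := by
    intro b hb b' hb' hne
    rw [Function.onFun, Set.disjoint_left]
    rintro ω ⟨h1, _⟩ ⟨h2, _⟩
    rw [Set.mem_preimage, Set.mem_singleton_iff] at h1 h2
    exact hne (h1 ▸ h2 ▸ rfl)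
  have hmeasp : ∀ b ∈ B, MeasurableSet (xhat ⁻¹' {b} ∩ v ⁻¹' S b) := by
    intro b _
    exact (hmx (measurableSet_singleton b)).inter (hmv (hSmeas b))
  rw [measure_biUnion_finset hdisj hmeasp]
  -- per-piece value
  have hterm : ∀ b ∈ B, P (xhat ⁻¹' {b} ∩ v ⁻¹' S b)
      = (B.card : ℝ≥0∞)⁻¹ * ∏ i, ENNReal.ofReal
          (if b i = l i ∨ b i = u i then 1/2 + phi σ (R i i) / 2 else phi σ (R i i)) := by
    intro b hb
    rw [hindep.measure_inter_preimage_eq_mul _ _ (measurableSet_singleton b) (hSmeas b)]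
    congr 1
    · exact hunif b hb
    · haveI : IsProbabilityMeasure (gaussianReal 0 (⟨σ ^ 2, sq_nonneg σ⟩ : ℝ≥0)) := instIsProbabilityMeasureGaussianReal 0 _
      rw [← Measure.map_apply hmv (hSmeas b), hv, hSdef, Measure.pi_pi]
      apply Finset.prod_congr rfl
      intro i _
      have hbi : l i ≤ b i ∧ b i ≤ u i := by
        rw [hB] at hb
        have := Fintype.mem_piFinset.mp hb i
        rwa [Finset.mem_Icc] at this
      exact nu_clampSet hσ (l i) (u i) (hlu i) (R i i) (hdiag i) (b i) hbi.1 hbi.2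
  rw [Finset.sum_congr rfl hterm, ← Finset.mul_sum]
  -- sum over the box factorizes
  have hfact : ∑ b ∈ B, ∏ i, ENNReal.ofReal
        (if b i = l i ∨ b i = u i then 1/2 + phi σ (R i i) / 2 else phi σ (R i i))
      = ∏ i, ENNReal.ofReal (1 + ((u i - l i : ℤ) : ℝ) * phi σ (R i i)) := by
    rw [hB]
    refine (Finset.prod_univ_sum (fun i => Finset.Icc (l i) (u i))
      (fun i c => ENNReal.ofReal
        (if c = l i ∨ c = u i then 1/2 + phi σ (R i i) / 2 else phi σ (R i i)))).symm.trans ?_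
    apply Finset.prod_congr rfl
    intro i _
    exact sum_clamp hσ (hdiag i) (l i) (u i) (hlu i)
  rw [hfact]
  -- compute toReal
  have hynn : ∀ i : Fin n, (0:ℝ) ≤ 1 + ((u i - l i : ℤ) : ℝ) * phi σ (R i i) := by
    intro i
    have h1 : (0:ℝ) ≤ ((u i - l i : ℤ) : ℝ) := by
      exact_mod_cast (by have := hlu i; omega : (0:ℤ) ≤ u i - l i)
    have h2 := phi_nonneg hσ (R i i) (hdiag i).le
    nlinarith
  rw [ENNReal.toReal_mul, ENNReal.toReal_inv, ENNReal.toReal_natCast, ENNReal.toReal_prod]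
  have hprodt : ∏ i, (ENNReal.ofReal (1 + ((u i - l i : ℤ) : ℝ) * phi σ (R i i))).toReal
      = ∏ i, (1 + ((u i - l i : ℤ) : ℝ) * phi σ (R i i)) :=
    Finset.prod_congr rfl fun i _ => ENNReal.toReal_ofReal (hynn i)
  rw [hprodt]
  -- cardinality of the box
  have hcard : (B.card : ℝ) = ∏ i, ((u i - l i + 1 : ℤ) : ℝ) := by
    rw [hB, Fintype.card_piFinset]
    push_cast
    apply Finset.prod_congr rfl
    intro i _
    rw [Int.card_Icc]
    have h3 : ((u i + 1 - l i).toNat : ℤ) = u i + 1 - l i :=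
      Int.toNat_of_nonneg (by have := hlu i; omega)
    have h4 : ((u i + 1 - l i).toNat : ℝ) = ((u i + 1 - l i : ℤ) : ℝ) := by exact_mod_cast h3
    rw [h4]
    push_cast
    ring
  rw [hcard]
  have hNpos : ∀ i : Fin n, (0:ℝ) < ((u i - l i + 1 : ℤ) : ℝ) := by
    intro i
    exact_mod_cast (by have := hlu i; omega : (0:ℤ) < u i - l i + 1)
  have hrhs : ∀ i : Fin n, (1 / ((u i - l i + 1 : ℤ) : ℝ)
        + (((u i - l i : ℤ) : ℝ) / ((u i - l i + 1 : ℤ) : ℝ)) * phi σ (R i i))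
      = (1 + ((u i - l i : ℤ) : ℝ) * phi σ (R i i)) * (((u i - l i + 1 : ℤ) : ℝ))⁻¹ := by
    intro i
    have hne := (hNpos i).ne'
    field_simp
  rw [Finset.prod_congr rfl fun i _ => hrhs i, Finset.prod_mul_distrib,
    ← Finset.prod_inv_distrib, mul_comm]
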